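/- arXiv:1606.03320 — 5 statements merged into one kernel-verified Lean document; each statement's English description precedes it below -/
import Mathlib

section
/- Let H' ⊆ H ⊆ G be subgroups of finite index. Then every element of G # H, viewed as a bijection of G, lies in G # H', so G # H is a subgroup of G # H'. Moreover, with X = G/H, X' = G/H', Y = H/H', coset representatives (s_x)_{x∈X} for H in G and (t_y)_{y∈Y} for H' in H, the set {s_x t_y : x ∈ X, y ∈ Y} is a complete set of coset representatives for H' in G; and if ρ_s(α) = (π, (h_x)) then ρ_{s'}(α) = (π', (h'_{x'})) where π'(s_x t_y H') = s_{π(x)} t_{h_x y} H' and h'_{s_x t_y H'} = t__{h_x y}^{-1} h_x t_y, where h_x y denotes the coset h_x t_y H' ∈ Y. -/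
section Plectic

variable {G : Type*} [Group G]

/-- The plectic group `G # H`: bijections of `G` commuting with right translation by `H`. -/
def plectic (G : Type*) [Group G] (H : Subgroup G) : Subgroup (Equiv.Perm G) where
  carrier := {α : Equiv.Perm G | ∀ (g : G), ∀ h ∈ H, α (g * h) = α g * h}
  one_mem' := fun _ _ _ => rfl
  mul_mem' := by
    intro a b ha hb g h hh
    simp only [Equiv.Perm.mul_apply, hb g h hh, ha (b g) h hh]
  inv_mem' := by
    intro a ha g h hh
    apply a.injective
    rw [ha (a⁻¹ g) h hh]
    simp

theorem mem_plectic {H : Subgroup G} {α : Equiv.Perm G} :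
    α ∈ plectic G H ↔ ∀ (g : G), ∀ h ∈ H, α (g * h) = α g * h := Iff.rfl

theorem plectic_apply {H : Subgroup G} (α : plectic G H) (g : G) {h : G} (hh : h ∈ H) :
    (α : Equiv.Perm G) (g * h) = (α : Equiv.Perm G) g * h := α.2 g h hh

/-- The permutation of left cosets `G ⧸ H` induced by an element of the plectic group. -/
def inducedPerm {H : Subgroup G} (α : plectic G H) : Equiv.Perm (G ⧸ H) where
  toFun := Quotient.map' (⇑(α : Equiv.Perm G)) (by
    intro a b hab
    rw [QuotientGroup.leftRel_apply] at hab ⊢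
    have h1 := plectic_apply α a hab
    rw [mul_inv_cancel_left] at h1
    rw [h1, inv_mul_cancel_left]
    exact hab)
  invFun := Quotient.map' (⇑((α⁻¹ : plectic G H) : Equiv.Perm G)) (by
    intro a b hab
    rw [QuotientGroup.leftRel_apply] at hab ⊢
    have h1 := plectic_apply α⁻¹ a hab
    rw [mul_inv_cancel_left] at h1
    rw [h1, inv_mul_cancel_left]
    exact hab)
  left_inv := by
    intro q
    induction q using Quotient.inductionOn' with
    | h g => simp [Quotient.map'_mk'']
  right_inv := by
    intro q
    induction q using Quotient.inductionOn' with
    | h g => simp [Quotient.map'_mk'']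

theorem inducedPerm_mk {H : Subgroup G} (α : plectic G H) (g : G) :
    inducedPerm α (QuotientGroup.mk g) = QuotientGroup.mk ((α : Equiv.Perm G) g) := rfl

/-- `h_x(α) = s_{π(α)(x)}⁻¹ · α(s_x)`. -/
def hcomp {H : Subgroup G} (α : plectic G H) (s : G ⧸ H → G) (x : G ⧸ H) : G :=
  (s (inducedPerm α x))⁻¹ * (α : Equiv.Perm G) (s x)

theorem hcomp_mem {H : Subgroup G} (α : plectic G H) {s : G ⧸ H → G}
    (hs : ∀ x, QuotientGroup.mk (s x) = x) (x : G ⧸ H) : hcomp α s x ∈ H := by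
  simp only [hcomp]
  rw [← QuotientGroup.eq, hs, ← inducedPerm_mk α (s x), hs]

/-- The map `ρ_s` to (the underlying set of) the wreath product. -/
def rhoPair {H : Subgroup G} (s : G ⧸ H → G) (hs : ∀ x, QuotientGroup.mk (s x) = x)
    (α : plectic G H) : Equiv.Perm (G ⧸ H) × ((G ⧸ H) → H) :=
  (inducedPerm α, fun x => ⟨hcomp α s x, hcomp_mem α hs x⟩)

end Plectic

/-- For `H' ⊆ H ⊆ G` of finite index: `G # H ≤ G # H'`; products of coset representatives
`s_x t_y` form a complete set of representatives for `H'` in `G`; and `ρ_{s'}` of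
`α ∈ G # H` is given by `π'(s_x t_y H') = s_{π(x)} t_{h_x·y} H'` and
`h'_{s_x t_y H'} = t_{h_x·y}⁻¹ h_x t_y ∈ H'`. -/
theorem plectic_subgroup_restriction (G : Type*) [Group G] (H H' : Subgroup G)
    (hle : H' ≤ H) [H.FiniteIndex] [H'.FiniteIndex]
    (s : G ⧸ H → G) (hs : ∀ x, QuotientGroup.mk (s x) = x)
    (t : (H ⧸ H'.subgroupOf H) → H)
    (ht : ∀ y, QuotientGroup.mk (t y) = y) :
    plectic G H ≤ plectic G H' ∧
    Function.Bijective
      (fun p : (G ⧸ H) × (H ⧸ H'.subgroupOf H) =>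
        (QuotientGroup.mk (s p.1 * (t p.2 : G)) : G ⧸ H')) ∧
    ∀ (α : plectic G H) (β : plectic G H'),
      (β : Equiv.Perm G) = (α : Equiv.Perm G) →
      ∀ (x : G ⧸ H) (y : H ⧸ H'.subgroupOf H),
        (inducedPerm β (QuotientGroup.mk (s x * (t y : G))) =
          (QuotientGroup.mk (s (inducedPerm α x) *
            (t (QuotientGroup.mk ((⟨hcomp α s x, hcomp_mem α hs x⟩ : H) * t y)) : G)) : G ⧸ H')) ∧
        ((s (inducedPerm α x) *
            (t (QuotientGroup.mk ((⟨hcomp α s x, hcomp_mem α hs x⟩ : H) * t y)) : G))⁻¹ *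
            (α : Equiv.Perm G) (s x * (t y : G)) =
          ((t (QuotientGroup.mk ((⟨hcomp α s x, hcomp_mem α hs x⟩ : H) * t y)))⁻¹ *
            (⟨hcomp α s x, hcomp_mem α hs x⟩ : H) * t y : H)) ∧
        (((t (QuotientGroup.mk ((⟨hcomp α s x, hcomp_mem α hs x⟩ : H) * t y)))⁻¹ *
            (⟨hcomp α s x, hcomp_mem α hs x⟩ : H) * t y : G) ∈ H') := by
  have key : ∀ a b : H, (QuotientGroup.mk a : H ⧸ H'.subgroupOf H) = QuotientGroup.mk b ↔
      ((a⁻¹ * b : H) : G) ∈ H' := by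
    intro a b
    rw [QuotientGroup.eq, Subgroup.mem_subgroupOf]
  refine ⟨fun α hα g h hh => hα g h (hle hh), ⟨?_, ?_⟩, ?_⟩
  · rintro ⟨x1, y1⟩ ⟨x2, y2⟩ h
    simp only [QuotientGroup.eq] at h
    have hx : x1 = x2 := by
      rw [← hs x1, ← hs x2, QuotientGroup.eq]
      have : ((s x1 * (t y1 : G))⁻¹ * (s x2 * (t y2 : G))) ∈ H := hle h
      have h2 : (t y1 : G) * ((s x1 * (t y1 : G))⁻¹ * (s x2 * (t y2 : G))) * (t y2 : G)⁻¹
          ∈ H := H.mul_mem (H.mul_mem (t y1).2 this) (H.inv_mem (t y2).2)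
      convert h2 using 1
      group
    subst hx
    have hy : ((t y1)⁻¹ * t y2 : H) ∈ H'.subgroupOf H := by
      rw [Subgroup.mem_subgroupOf]
      convert h using 1
      push_cast
      group
    have := (QuotientGroup.eq (s := H'.subgroupOf H)).2 hy
    rw [ht, ht] at this
    rw [Prod.mk.injEq]
    exact ⟨rfl, this⟩
  · intro q
    obtain ⟨g, rfl⟩ := QuotientGroup.mk_surjective q
    have hg : (s (QuotientGroup.mk g))⁻¹ * g ∈ H := by rw [← QuotientGroup.eq, hs]
    refine ⟨⟨QuotientGroup.mk g, QuotientGroup.mk ⟨(s (QuotientGroup.mk g))⁻¹ * g, hg⟩⟩, ?_⟩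
    have h2 := (key (t (QuotientGroup.mk ⟨(s (QuotientGroup.mk g))⁻¹ * g, hg⟩))
      ⟨(s (QuotientGroup.mk g))⁻¹ * g, hg⟩).1 (by rw [ht])
    simp only [QuotientGroup.eq]
    push_cast at h2 ⊢
    convert h2 using 1
    group
  · intro α β hβα x y
    set h : H := ⟨hcomp α s x, hcomp_mem α hs x⟩ with hh
    set z := (QuotientGroup.mk (h * t y) : H ⧸ H'.subgroupOf H) with hz
    have htz : ((t z)⁻¹ * (h * t y) : H) ∈ H'.subgroupOf H := by
      rw [← QuotientGroup.eq, ht]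
    rw [Subgroup.mem_subgroupOf] at htz
    have hAsx : (α : Equiv.Perm G) (s x) = s (inducedPerm α x) * (h : G) := by
      simp only [hh, hcomp]
      group
    have hmem3 : (((t z)⁻¹ * h * t y : H) : G) ∈ H' := by
      convert htz using 2
      group
    refine ⟨?_, ?_, hmem3⟩
    · rw [inducedPerm_mk, hβα]
      have h1 : (α : Equiv.Perm G) (s x * (t y : G)) = (α : Equiv.Perm G) (s x) * (t y : G) :=
        plectic_apply α (s x) (t y).2
      rw [h1, hAsx, QuotientGroup.eq]
      convert H'.inv_mem hmem3 using 1
      push_cast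
      group
    · have h1 : (α : Equiv.Perm G) (s x * (t y : G)) = (α : Equiv.Perm G) (s x) * (t y : G) :=
        plectic_apply α (s x) (t y).2
      rw [h1, hAsx]
      push_cast
      group
end

section
/- Let G be a group, H ⊆ G a subgroup of finite index, u ∈ G, and H' = uHu^{-1}. Then the map [u] : G # H → G # H' defined by ([u]α)(g) = α(gu)·u^{-1} for all g ∈ G is a well-defined group isomorphism, and it depends only on the left coset uH (i.e. if u' = uh with h ∈ H then [u'] = [u]). -/
section Aux

variable {G : Type*} [Group G]

/-- Conjugation permutation on `Equiv.Perm G` level: `g ↦ α (g * u) * u⁻¹`. -/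
def conjPerm (u : G) (α : Equiv.Perm G) : Equiv.Perm G :=
  (Equiv.mulRight u).trans (α.trans (Equiv.mulRight u⁻¹))

theorem conjPerm_apply (u : G) (α : Equiv.Perm G) (g : G) :
    conjPerm u α g = α (g * u) * u⁻¹ := rfl

theorem conjPerm_mem (u : G) (H : Subgroup G) (α : Equiv.Perm G) (hα : α ∈ plectic G H) :
    conjPerm u α ∈ plectic G (H.map (MulAut.conj u).toMonoidHom) := by
  rintro g h' ⟨h, hh, rfl⟩
  simp only [conjPerm_apply, MulEquiv.coe_toMonoidHom, MulAut.conj_apply]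
  have : g * (u * h * u⁻¹) * u = g * u * h := by group
  rw [this, hα _ h hh]
  group

/-- The conjugation monoid hom between plectic groups. -/
def conjHom (u : G) (H : Subgroup G) :
    plectic G H →* plectic G (H.map (MulAut.conj u).toMonoidHom) where
  toFun α := ⟨conjPerm u (α : Equiv.Perm G), conjPerm_mem u H α α.2⟩
  map_one' := by
    ext g
    simp [conjPerm_apply]
  map_mul' α β := by
    ext g
    show conjPerm u ((α * β : plectic G H) : Equiv.Perm G) g = conjPerm u (α : Equiv.Perm G) (conjPerm u (β : Equiv.Perm G) g)
    simp [conjPerm_apply, mul_assoc]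

theorem map_conj_conj_inv (u : G) (H : Subgroup G) :
    (H.map (MulAut.conj u).toMonoidHom).map (MulAut.conj u⁻¹).toMonoidHom = H := by
  ext x
  constructor
  · rintro ⟨y, ⟨h, hh, rfl⟩, rfl⟩
    simp only [MulEquiv.coe_toMonoidHom, MulAut.conj_apply]
    have : u⁻¹ * (u * h * u⁻¹) * u⁻¹⁻¹ = h := by group
    rwa [this]
  · intro hx
    exact ⟨u * x * u⁻¹, ⟨x, hx, rfl⟩, by simp; group⟩

end Aux

/-- For `u ∈ G` and `H' = uHu⁻¹`, the map `[u] : G # H → G # H'`, `([u]α)(g) = α(gu)u⁻¹`,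
is a well-defined group isomorphism depending only on the coset `uH`. -/
theorem plectic_conj_iso (G : Type*) [Group G] (H : Subgroup G) [H.FiniteIndex] (u : G) :
    ∃ e : plectic G H ≃* plectic G (H.map (MulAut.conj u).toMonoidHom),
      (∀ (α : plectic G H) (g : G),
        ((e α : Equiv.Perm G)) g = (α : Equiv.Perm G) (g * u) * u⁻¹) ∧
      ∀ h ∈ H,
        (H.map (MulAut.conj (u * h)).toMonoidHom = H.map (MulAut.conj u).toMonoidHom) ∧
        ∀ (α : plectic G H) (g : G),
          (α : Equiv.Perm G) (g * (u * h)) * (u * h)⁻¹ =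
            (α : Equiv.Perm G) (g * u) * u⁻¹ := by
  set H' := H.map (MulAut.conj u).toMonoidHom with hH'
  have hback : ∀ β : plectic G H', conjPerm u⁻¹ (β : Equiv.Perm G) ∈ plectic G H := by
    intro β
    have := conjPerm_mem u⁻¹ H' (β : Equiv.Perm G) β.2
    rwa [map_conj_conj_inv] at this
  refine ⟨{ toFun := conjHom u H,
            invFun := fun β => ⟨conjPerm u⁻¹ (β : Equiv.Perm G), hback β⟩,
            left_inv := ?_, right_inv := ?_,
            map_mul' := map_mul (conjHom u H) }, ?_, ?_⟩
  · intro α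
    ext g
    simp only [conjHom, MonoidHom.coe_mk, OneHom.coe_mk, conjPerm_apply]
    group
  · intro β
    ext g
    simp only [conjHom, MonoidHom.coe_mk, OneHom.coe_mk, conjPerm_apply]
    group
  · intro α g
    rfl
  · intro h hh
    constructor
    · ext x
      constructor
      · rintro ⟨y, hy, rfl⟩
        exact ⟨h * y * h⁻¹, H.mul_mem (H.mul_mem hh hy) (H.inv_mem hh), by simp⟩
      · rintro ⟨y, hy, rfl⟩
        exact ⟨h⁻¹ * y * h, H.mul_mem (H.mul_mem (H.inv_mem hh) hy) hh, by simp; group⟩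
    · intro α g
      rw [← mul_assoc, plectic_apply α (g * u) hh]
      rw [mul_inv_rev]
      group
end

section
/- Let G be a topological group and H ⊆ G an open subgroup of finite index, with X = G/H. Fix a section s of G → X and endow G # H with the topology transported via ρ_s from the product topology on Sym(X) × H^X (Sym(X) discrete, H^X the product topology). This topology is independent of the choice of section s, and the inclusion G ↪ G # H (by left translations) is continuous. -/
section Aux

open TopologicalSpace

theorem plectic_induced_le_aux {G : Type*} [Group G] [TopologicalSpace G] [IsTopologicalGroup G]
    (H : Subgroup G) (s s' : G ⧸ H → G)
    (hs : ∀ x, QuotientGroup.mk (s x) = x) (hs' : ∀ x, QuotientGroup.mk (s' x) = x) :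
    TopologicalSpace.induced (rhoPair s hs)
        (@instTopologicalSpaceProd _ _ (⊥ : TopologicalSpace (Equiv.Perm (G ⧸ H)))
          inferInstance) ≤
      TopologicalSpace.induced (rhoPair s' hs')
        (@instTopologicalSpaceProd _ _ (⊥ : TopologicalSpace (Equiv.Perm (G ⧸ H)))
          inferInstance) := by
  letI : TopologicalSpace (Equiv.Perm (G ⧸ H)) := ⊥
  have htmem : ∀ x : G ⧸ H, (s x)⁻¹ * s' x ∈ H := fun x =>
    (QuotientGroup.eq).mp ((hs x).trans (hs' x).symm)
  set t : G ⧸ H → H := fun x => ⟨(s x)⁻¹ * s' x, htmem x⟩ with ht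
  set F : Equiv.Perm (G ⧸ H) × ((G ⧸ H) → H) → Equiv.Perm (G ⧸ H) × ((G ⧸ H) → H) :=
    fun p => (p.1, fun x => (t (p.1 x))⁻¹ * p.2 x * t x) with hFdef
  have hcomp_eq : rhoPair s' hs' = F ∘ rhoPair s hs := by
    funext α
    refine Prod.ext rfl ?_
    funext x
    apply Subtype.ext
    show hcomp α s' x =
      (((t (inducedPerm α x))⁻¹ * ⟨hcomp α s x, hcomp_mem α hs x⟩ * t x : H) : G)
    have h1 : (α : Equiv.Perm G) (s' x)
        = (α : Equiv.Perm G) (s x) * ((s x)⁻¹ * s' x) := by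
      conv_lhs => rw [show s' x = s x * ((s x)⁻¹ * s' x) by group]
      exact plectic_apply α (s x) (htmem x)
    simp only [hcomp, ht]
    push_cast
    rw [h1]
    group
  have hF : Continuous F := by
    refine continuous_fst.prodMk (continuous_pi fun x => ?_)
    have c1 : Continuous fun σ : Equiv.Perm (G ⧸ H) => t (σ x) := continuous_bot
    have c2 : Continuous fun p : Equiv.Perm (G ⧸ H) × ((G ⧸ H) → H) => t (p.1 x) :=
      c1.comp continuous_fst
    exact (c2.inv.mul ((continuous_apply x).comp continuous_snd)).mul continuous_const
  rw [hcomp_eq, ← induced_compose]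
  exact induced_mono (continuous_iff_le_induced.mp hF)

end Aux

/-- For a topological group `G` and an open finite-index subgroup `H`, the topology on
`G # H` transported via `ρ_s` from `Sym(X) × H^X` (`Sym(X)` discrete, `H^X` the product
topology) is independent of the section `s`, and the inclusion of `G` by left translations
is continuous. -/
theorem plectic_topology (G : Type*) [Group G] [TopologicalSpace G] [IsTopologicalGroup G]
    (H : Subgroup G) (hH : IsOpen (H : Set G)) [H.FiniteIndex]
    (s s' : G ⧸ H → G)
    (hs : ∀ x, QuotientGroup.mk (s x) = x) (hs' : ∀ x, QuotientGroup.mk (s' x) = x) :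
    (TopologicalSpace.induced (rhoPair s hs)
        (@instTopologicalSpaceProd _ _ (⊥ : TopologicalSpace (Equiv.Perm (G ⧸ H)))
          inferInstance) =
      TopologicalSpace.induced (rhoPair s' hs')
        (@instTopologicalSpaceProd _ _ (⊥ : TopologicalSpace (Equiv.Perm (G ⧸ H)))
          inferInstance)) ∧
    @Continuous G (plectic G H) _
      (TopologicalSpace.induced (rhoPair s hs)
        (@instTopologicalSpaceProd _ _ (⊥ : TopologicalSpace (Equiv.Perm (G ⧸ H)))
          inferInstance))
      (fun g : G => (⟨Equiv.mulLeft g, fun x h _ => (mul_assoc g x h).symm⟩ : plectic G H)) := by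
  classical
  have main := fun (s s' : G ⧸ H → G) hs hs' => plectic_induced_le_aux H s s' hs hs'
  refine ⟨le_antisymm (main s s' hs hs') (main s' s hs' hs), ?_⟩
  letI : TopologicalSpace (Equiv.Perm (G ⧸ H)) := ⊥
  letI : TopologicalSpace (plectic G H) :=
    TopologicalSpace.induced (rhoPair s hs)
      (@instTopologicalSpaceProd _ _ (⊥ : TopologicalSpace (Equiv.Perm (G ⧸ H))) inferInstance)
  set L : G → plectic G H :=
    fun g : G => (⟨Equiv.mulLeft g, fun x h _ => (mul_assoc g x h).symm⟩ : plectic G H) with hL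
  show Continuous L
  rw [continuous_induced_rng]
  have key : ∀ (g : G) (x : G ⧸ H),
      inducedPerm (L g) x = QuotientGroup.mk (g * s x) := by
    intro g x
    conv_lhs => rw [← hs x]
    rfl
  have hf1 : Continuous fun g : G => inducedPerm (L g) := by
    rw [continuous_def]
    intro U _
    have hset : (fun g : G => inducedPerm (L g)) ⁻¹' U =
        ⋃ σ ∈ U, ⋂ x : G ⧸ H, {g : G | (g * s x)⁻¹ * s (σ x) ∈ H} := by
      ext g
      simp only [Set.mem_preimage, Set.mem_iUnion, Set.mem_iInter, Set.mem_setOf_eq]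
      have hiff : ∀ σ : Equiv.Perm (G ⧸ H), inducedPerm (L g) = σ ↔
          ∀ x, (g * s x)⁻¹ * s (σ x) ∈ H := by
        intro σ
        rw [Equiv.ext_iff]
        refine forall_congr' fun x => ?_
        rw [key g x]
        conv_lhs => rw [← hs (σ x)]
        exact QuotientGroup.eq
      constructor
      · intro hg
        exact ⟨_, hg, (hiff _).mp rfl⟩
      · rintro ⟨σ, hσU, hσ⟩
        rw [(hiff σ).mpr hσ]
        exact hσU
    rw [hset]
    refine isOpen_biUnion fun σ _ => isOpen_iInter_of_finite fun x => ?_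
    exact hH.preimage (((continuous_id.mul continuous_const).inv).mul continuous_const)
  refine hf1.prodMk (continuous_pi fun x => ?_)
  refine Continuous.subtype_mk ?_ _
  show Continuous fun g : G => (s (inducedPerm (L g) x))⁻¹ * (g * s x)
  have c1 : Continuous fun σ : Equiv.Perm (G ⧸ H) => s (σ x) := continuous_bot
  exact ((c1.comp hf1).inv).mul (continuous_id.mul continuous_const)
end

section
/- Let G be a group, K ⊆ G a finite-index subgroup, w : G/K → G a section, A an abelian group and f : K → A a homomorphism which is invariant under conjugation by elements of G (f(gkg^{-1}) = f(k) whenever gkg^{-1} ∈ K). For Φ ⊆ G/K and α ∈ G # K define F_Φ(α) = ∏_{φ∈Φ} f(h_φ(α)) where h_φ(α) = w_{αφ}^{-1}α(w_φ). If Φ is stable under α (i.e. αΦ = Φ as sets) for all α in a subgroup P ⊆ G # K, then F_Φ : P → A is a group homomorphism. -/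
theorem inducedPerm_mul {G : Type*} [Group G] {H : Subgroup G} (α β : plectic G H) (x : G ⧸ H) :
    inducedPerm (α * β) x = inducedPerm α (inducedPerm β x) := by
  induction x using Quotient.inductionOn' with
  | h g => rfl

theorem hcomp_cocycle {G : Type*} [Group G] {H : Subgroup G} (α β : plectic G H)
    {w : G ⧸ H → G} (hw : ∀ x, QuotientGroup.mk (w x) = x) (φ : G ⧸ H) :
    hcomp (α * β) w φ = hcomp α w (inducedPerm β φ) * hcomp β w φ := by
  have hβ : ((β : Equiv.Perm G)) (w φ) = w (inducedPerm β φ) * hcomp β w φ := by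
    simp [hcomp]
  simp only [hcomp, inducedPerm_mul]
  have := plectic_apply α (w (inducedPerm β φ)) (hcomp_mem β hw φ)
  rw [show ((α * β : plectic G H) : Equiv.Perm G) (w φ)
      = (α : Equiv.Perm G) ((β : Equiv.Perm G) (w φ)) from rfl, hβ, this, mul_assoc, inv_mul_cancel_left]

/-- If `f : K → A` is conjugation-invariant and `Φ ⊆ G/K` is stable under every element of a
subgroup `P ⊆ G # K`, then `F_Φ(α) = ∏_{φ∈Φ} f(h_φ(α))` is a homomorphism on `P`. -/
theorem halfTransfer_hom (G : Type*) [Group G] (K : Subgroup G) [K.FiniteIndex]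
    (w : G ⧸ K → G) (hw : ∀ x, QuotientGroup.mk (w x) = x)
    (A : Type*) [CommGroup A] (f : K →* A)
    (hf : ∀ (g : G) (k k' : K), (k' : G) = g * (k : G) * g⁻¹ → f k' = f k)
    (Φ : Set (G ⧸ K)) (P : Subgroup (plectic G K))
    (hP : ∀ α : plectic G K, α ∈ P → (inducedPerm α) '' Φ = Φ) :
    ∀ α β : plectic G K, α ∈ P → β ∈ P →
      (∏ᶠ φ ∈ Φ, f (⟨hcomp (α * β) w φ, hcomp_mem (α * β) hw φ⟩ : K)) =
        (∏ᶠ φ ∈ Φ, f (⟨hcomp α w φ, hcomp_mem α hw φ⟩ : K)) *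
          (∏ᶠ φ ∈ Φ, f (⟨hcomp β w φ, hcomp_mem β hw φ⟩ : K)) := by
  intro α β hα hβ
  have hΦ : Φ.Finite := Set.toFinite Φ
  have step : (∏ᶠ φ ∈ Φ, f (⟨hcomp (α * β) w φ, hcomp_mem (α * β) hw φ⟩ : K)) =
      ∏ᶠ φ ∈ Φ, (f (⟨hcomp α w (inducedPerm β φ), hcomp_mem α hw _⟩ : K) *
        f (⟨hcomp β w φ, hcomp_mem β hw φ⟩ : K)) := by
    apply finprod_mem_congr rfl
    intro φ _
    rw [← map_mul]
    congr 1
    exact Subtype.ext (hcomp_cocycle α β hw φ)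
  rw [step, finprod_mem_mul_distrib hΦ]
  congr 1
  have : (∏ᶠ φ ∈ Φ, f (⟨hcomp α w (inducedPerm β φ), hcomp_mem α hw _⟩ : K)) =
      ∏ᶠ ψ ∈ (inducedPerm β) '' Φ, f (⟨hcomp α w ψ, hcomp_mem α hw ψ⟩ : K) := by
    rw [finprod_mem_image (Set.injOn_of_injective (inducedPerm β).injective)]
  rw [this, hP β hβ]
end

section
/- Let k be a Galois extension of ℚ and F ⊆ k a number field, with G = Gal(k/ℚ), H = Gal(k/F), X = G/H ≅ Hom(F, k). The wreath product isomorphism Aut_F(k^X) ≅ Sym(X) ⋉ H^X holds: the map sending (π, (h_x)_{x∈X}) to the automorphism of the F-algebra k^X (with F acting diagonally via F ⊆ k) defined by (a_x)_x ↦ (b_x)_x with b_{π(x)} = h_x(a_x) is a group isomorphism onto Aut_F(k^X). -/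
/-- The wreath product `Sym(X) ⋉ H^X`, with multiplication
`(π₁,(h_x))·(π₂,(k_x)) = (π₁π₂, (h_{π₂(x)}·k_x)_x)`. -/
def Wr (X : Type*) (H : Type*) [Group H] : Type _ := Equiv.Perm X × (X → H)

namespace Wr

variable {X : Type*} {H : Type*} [Group H]

instance : Mul (Wr X H) := ⟨fun a b => (a.1 * b.1, fun x => a.2 (b.1 x) * b.2 x)⟩
instance : One (Wr X H) := ⟨((1 : Equiv.Perm X), fun _ => (1 : H))⟩
instance : Inv (Wr X H) := ⟨fun a => (a.1⁻¹, fun x => (a.2 (a.1⁻¹ x))⁻¹)⟩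

instance instGroup : Group (Wr X H) where
  mul_assoc a b c := by
    refine Prod.ext (mul_assoc a.1 b.1 c.1) ?_
    funext x
    exact mul_assoc _ _ _
  one_mul a := by
    refine Prod.ext (one_mul a.1) ?_
    funext x
    exact one_mul _
  mul_one a := by
    refine Prod.ext (mul_one a.1) ?_
    funext x
    exact mul_one _
  inv_mul_cancel a := by
    refine Prod.ext (inv_mul_cancel a.1) ?_
    funext x
    show (a.2 (a.1⁻¹ (a.1 x)))⁻¹ * a.2 x = 1
    rw [show a.1⁻¹ (a.1 x) = x from a.1.symm_apply_apply x, inv_mul_cancel]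

end Wr

set_option maxHeartbeats 1000000
set_option synthInstance.maxHeartbeats 1000000

section Phi
variable {k : Type*} [Field k] [CharZero k] (F : IntermediateField ℚ k)

/-- The F-algebra automorphism of `k^X` associated to a wreath product element. -/
def PhiA (p : Wr ((k ≃ₐ[ℚ] k) ⧸ F.fixingSubgroup) F.fixingSubgroup) :
    (((k ≃ₐ[ℚ] k) ⧸ F.fixingSubgroup) → k) ≃ₐ[F]
      (((k ≃ₐ[ℚ] k) ⧸ F.fixingSubgroup) → k) where
  toFun a y := (p.2 (p.1.symm y) : k ≃ₐ[ℚ] k) (a (p.1.symm y))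
  invFun a x := ((p.2 x : k ≃ₐ[ℚ] k)).symm (a (p.1 x))
  left_inv a := funext fun x => by simp
  right_inv a := funext fun y => by simp
  map_mul' a b := funext fun y => map_mul _ _ _
  map_add' a b := funext fun y => map_add _ _ _
  commutes' c := funext fun y => by
    have hmem := (p.2 (p.1.symm y)).2
    have h2 := (mem_fixingSubgroup_iff (k ≃ₐ[ℚ] k)).mp hmem (c : k) c.2
    rw [AlgEquiv.smul_def] at h2
    exact h2

end Phi

section Phi2
variable {k : Type*} [Field k] [CharZero k] (F : IntermediateField ℚ k)

theorem PhiA_mul (p q : Wr ((k ≃ₐ[ℚ] k) ⧸ F.fixingSubgroup) F.fixingSubgroup) :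
    PhiA F (p * q) = PhiA F p * PhiA F q := by
  apply AlgEquiv.ext; intro a; funext y
  show ((p.2 (q.1 (q.1.symm (p.1.symm y))) * q.2 (q.1.symm (p.1.symm y)) :
        F.fixingSubgroup) : k ≃ₐ[ℚ] k) (a (q.1.symm (p.1.symm y)))
      = (p.2 (p.1.symm y) : k ≃ₐ[ℚ] k)
        ((q.2 (q.1.symm (p.1.symm y)) : k ≃ₐ[ℚ] k) (a (q.1.symm (p.1.symm y))))
  rw [Equiv.apply_symm_apply]
  rfl

/-- `PhiA` as a monoid hom. -/
def Phi : Wr ((k ≃ₐ[ℚ] k) ⧸ F.fixingSubgroup) F.fixingSubgroup →*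
    ((((k ≃ₐ[ℚ] k) ⧸ F.fixingSubgroup) → k) ≃ₐ[F]
      (((k ≃ₐ[ℚ] k) ⧸ F.fixingSubgroup) → k)) :=
  MonoidHom.mk' (PhiA F) (PhiA_mul F)

end Phi2

theorem exists_eval (F k X : Type*) [Field F] [Field k] [Algebra F k]
    [Algebra.IsAlgebraic F k] [Finite X] (χ : (X → k) →ₐ[F] k) :
    ∃ (x : X) (g : k ≃ₐ[F] k), ∀ a : X → k, χ a = g (a x) := by
  classical
  cases nonempty_fintype X
  haveI : NoZeroSMulDivisors F k :=
    inferInstance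
  have hsum : (∑ x : X, Pi.single x (1 : k)) = (1 : X → k) := by
    funext y; simp [Finset.sum_apply, Pi.single_apply]
  have h1 : ∑ x : X, χ (Pi.single x 1) = 1 := by rw [← map_sum, hsum, map_one]
  have hx : ∃ x : X, χ (Pi.single x (1 : k)) ≠ 0 := by
    by_contra h
    push_neg at h
    rw [Finset.sum_congr rfl (fun x _ => h x), Finset.sum_const, smul_zero] at h1
    exact one_ne_zero h1.symm
  obtain ⟨x, hx⟩ := hx
  have hsingle_mul : ∀ s t : k,
      Pi.single x s * Pi.single x t = Pi.single (M := fun _ : X => k) x (s * t) := by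
    intro s t; funext y
    rcases eq_or_ne y x with rfl | h
    · simp
    · simp [Pi.single_eq_of_ne h]
  have he : χ (Pi.single x (1 : k)) = 1 := by
    have h2 : χ (Pi.single x (1 : k)) * χ (Pi.single x 1) = χ (Pi.single x 1) := by
      rw [← map_mul, hsingle_mul, one_mul]
    exact mul_right_cancel₀ hx (by rw [h2, one_mul])
  let g0 : k →ₐ[F] k :=
    { toFun := fun t => χ (Pi.single x t)
      map_one' := he
      map_mul' := fun s t => by show χ _ = χ _ * χ _; rw [← map_mul, hsingle_mul]
      map_zero' := by show χ _ = 0; rw [Pi.single_zero, map_zero]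
      map_add' := fun s t => by show χ _ = χ _ + χ _; rw [← map_add, ← Pi.single_add]
      commutes' := fun c => by
        have hs : Pi.single (M := fun _ : X => k) x (algebraMap F k c)
            = algebraMap F (X → k) c * Pi.single x 1 := by
          funext y
          rcases eq_or_ne y x with rfl | h
          · simp
          · simp [Pi.single_eq_of_ne h]
        show χ (Pi.single x (algebraMap F k c)) = _
        rw [hs, map_mul, χ.commutes, he, mul_one] }
  refine ⟨x, AlgEquiv.ofBijective g0 (Algebra.IsAlgebraic.algHom_bijective g0), fun a => ?_⟩
  have hmul : a * Pi.single x 1 = Pi.single (M := fun _ : X => k) x (a x) := by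
    funext y
    rcases eq_or_ne y x with rfl | h
    · simp
    · simp [Pi.single_eq_of_ne h]
  calc χ a = χ a * χ (Pi.single x 1) := by rw [he, mul_one]
    _ = χ (a * Pi.single x 1) := (map_mul χ _ _).symm
    _ = χ (Pi.single x (a x)) := by rw [hmul]
    _ = _ := rfl

theorem exists_rep (F k X : Type*) [Field F] [Field k] [Algebra F k]
    [Algebra.IsAlgebraic F k] [Finite X] (ψ : (X → k) ≃ₐ[F] (X → k)) :
    ∃ (τ : X → X) (σ : X → (k ≃ₐ[F] k)), ∀ (a : X → k) (y : X), ψ a y = σ y (a (τ y)) := by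
  have h := fun y => exists_eval F k X ((Pi.evalAlgHom F (fun _ => k) y).comp ψ.toAlgHom)
  choose τ σ hσ using h
  exact ⟨τ, σ, fun a y => hσ y a⟩


/-- The wreath product `Sym(X) ⋉ H^X` is isomorphic to `Aut_F(k^X)` (with `F` acting
diagonally via `F ⊆ k`), by sending `(π,(h_x))` to `(a_x)_x ↦ (b_x)_x` with
`b_{π(x)} = h_x(a_x)`. -/
theorem wreath_iso_aut_of_pi (k : Type*) [Field k] [NumberField k] [IsGalois ℚ k]
    (F : IntermediateField ℚ k) :
    ∃ Ψ : Wr ((k ≃ₐ[ℚ] k) ⧸ F.fixingSubgroup) F.fixingSubgroup ≃*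
        ((((k ≃ₐ[ℚ] k) ⧸ F.fixingSubgroup) → k) ≃ₐ[F]
          (((k ≃ₐ[ℚ] k) ⧸ F.fixingSubgroup) → k)),
      ∀ (p : Wr ((k ≃ₐ[ℚ] k) ⧸ F.fixingSubgroup) F.fixingSubgroup)
        (a : ((k ≃ₐ[ℚ] k) ⧸ F.fixingSubgroup) → k)
        (y : (k ≃ₐ[ℚ] k) ⧸ F.fixingSubgroup),
        (Ψ p) a y = ((p.2 (p.1.symm y) : k ≃ₐ[ℚ] k)) (a (p.1.symm y)) := by
  classical
  haveI : FiniteDimensional (↥F) k := FiniteDimensional.right ℚ (↥F) k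
  haveI : Algebra.IsAlgebraic (↥F) k := Algebra.IsAlgebraic.of_finite (↥F) k
  haveI : Finite ((k ≃ₐ[ℚ] k) ⧸ F.fixingSubgroup) := Quotient.finite _
  set X := (k ≃ₐ[ℚ] k) ⧸ F.fixingSubgroup with hXdef
  -- injectivity
  have hinj : Function.Injective (Phi F) := by
    rw [injective_iff_map_eq_one]
    intro p hp
    have h1 : ∀ (a : X → k) (y : X),
        (p.2 (p.1.symm y) : k ≃ₐ[ℚ] k) (a (p.1.symm y)) = a y := by
      intro a y
      have := congrFun (congrArg (fun (e : (X → k) ≃ₐ[F] (X → k)) => e a) hp) y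
      exact (by simpa using this : (Phi F) p a y = a y)
    have hπ : p.1 = 1 := by
      apply Equiv.ext
      intro x
      have := h1 (Pi.single x (1 : k)) (p.1 x)
      rw [Equiv.symm_apply_apply, Pi.single_eq_same, map_one] at this
      by_contra hne
      have hne' : p.1 x ≠ x := hne
      rw [Pi.single_eq_of_ne hne' 1] at this
      exact one_ne_zero this
    have hσ : p.2 = fun _ => 1 := by
      funext x
      apply Subtype.ext
      apply AlgEquiv.ext
      intro t
      have := h1 (fun _ => t) (p.1 x)
      rw [hπ] at this
      simpa [Equiv.Perm.one_symm] using this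
    exact Prod.ext hπ hσ
  -- surjectivity
  have hsurj : Function.Surjective (Phi F) := by
    intro ψ
    obtain ⟨τ, σ, hrep⟩ := exists_rep (↥F) k X ψ
    obtain ⟨τ', σ', hrep'⟩ := exists_rep (↥F) k X ψ.symm
    have hcomp : ∀ y, τ (τ' y) = y := by
      intro y
      by_contra hne
      have key : ∀ b : X → k, b y = σ' y (σ (τ' y) (b (τ (τ' y)))) := by
        intro b
        conv_lhs => rw [← ψ.symm_apply_apply b]
        erw [hrep' (ψ b) y, hrep b (τ' y)]
      have key2 := key (Pi.single y 1)
      rw [Pi.single_eq_same, Pi.single_eq_of_ne hne] at key2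
      simp at key2
    have hcomp' : ∀ y, τ' (τ y) = y := by
      intro y
      by_contra hne
      have key : ∀ b : X → k, b y = σ y (σ' (τ y) (b (τ' (τ y)))) := by
        intro b
        conv_lhs => rw [← ψ.apply_symm_apply b]
        erw [hrep (ψ.symm b) y, hrep' b (τ y)]
      have key2 := key (Pi.single y 1)
      rw [Pi.single_eq_same, Pi.single_eq_of_ne hne] at key2
      simp at key2
    let τe : Equiv X X := ⟨τ, τ', hcomp', hcomp⟩
    refine ⟨(τe.symm, fun x =>
      (IntermediateField.fixingSubgroupEquiv F).symm (σ (τe.symm x))), ?_⟩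
    apply AlgEquiv.ext
    intro a
    funext y
    show ((IntermediateField.fixingSubgroupEquiv F).symm (σ (τe.symm (τe.symm.symm y)))
        : k ≃ₐ[ℚ] k) (a (τe.symm.symm y)) = ψ a y
    erw [hrep a y]
    have h1 : τe.symm.symm y = τ y := rfl
    rw [h1]
    have h2 : τe.symm (τ y) = y := hcomp' y
    rw [h2]
    rfl
  refine ⟨MulEquiv.ofBijective (Phi F) ⟨hinj, hsurj⟩, fun p a y => rfl⟩
end
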